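/- Let A, P ∈ ℍ × ℍ be arbitrary octonions (pairs of real quaternions with the Cayley–Dickson product) and let e₁, …, e₈ be the standard octonion basis. Then the octonions A * (eᵢ * P), for i = 1, …, 8, are pairwise orthogonal with respect to the standard Euclidean inner product on the 8 real coordinates, and each has squared norm N(A * (eᵢ * P)) = N(A) * N(P). Equivalently, the 8×8 real matrix M whose i-th row consists of the 8 real coordinates of A * (eᵢ * P) satisfies M * Mᵀ = (N(A) * N(P)) • (identity matrix), so M is (up to distinctness of entries) a semi-magic square of squares with orthogonal rows and constant N(A) * N(P). -/

import Mathlib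

open Quaternion Matrix

/-- The Cayley–Dickson product on `ℍ × ℍ`, modelling the octonions. -/
noncomputable def omul (x y : ℍ[ℝ] × ℍ[ℝ]) : ℍ[ℝ] × ℍ[ℝ] :=
  (x.1 * y.1 - star y.2 * x.2, y.2 * x.1 + x.2 * star y.1)

/-- The octonionic norm on `ℍ × ℍ`. -/
noncomputable def onorm (x : ℍ[ℝ] × ℍ[ℝ]) : ℝ := ‖x.1‖ ^ 2 + ‖x.2‖ ^ 2

/-- The standard octonion basis `e₁, …, e₈` in `ℍ × ℍ`. -/
noncomputable def obasis : Fin 8 → ℍ[ℝ] × ℍ[ℝ]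
  | 0 => (1, 0)
  | 1 => (⟨0, 1, 0, 0⟩, 0)
  | 2 => (⟨0, 0, 1, 0⟩, 0)
  | 3 => (⟨0, 0, 0, 1⟩, 0)
  | 4 => (0, 1)
  | 5 => (0, ⟨0, 1, 0, 0⟩)
  | 6 => (0, ⟨0, 0, 1, 0⟩)
  | 7 => (0, ⟨0, 0, 0, 1⟩)

/-- The eight real coordinates of an octonion in `ℍ × ℍ`. -/
def ocoord (x : ℍ[ℝ] × ℍ[ℝ]) : Fin 8 → ℝ
  | 0 => x.1.re
  | 1 => x.1.imI
  | 2 => x.1.imJ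
  | 3 => x.1.imK
  | 4 => x.2.re
  | 5 => x.2.imI
  | 6 => x.2.imJ
  | 7 => x.2.imK

lemma onorm_eq (x : ℍ[ℝ] × ℍ[ℝ]) :
    onorm x = (x.1.re^2 + x.1.imI^2 + x.1.imJ^2 + x.1.imK^2)
      + (x.2.re^2 + x.2.imI^2 + x.2.imJ^2 + x.2.imK^2) := by
  simp only [onorm, sq, ← normSq_eq_norm_mul_self, normSq_def']

lemma oq_mul (a b : QuaternionAlgebra ℝ (-1) 0 (-1)) : @HMul.hMul ℍ[ℝ] ℍ[ℝ] ℍ[ℝ] _ a b =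
    ⟨a.re * b.re - a.imI * b.imI - a.imJ * b.imJ - a.imK * b.imK,
     a.re * b.imI + a.imI * b.re + a.imJ * b.imK - a.imK * b.imJ,
     a.re * b.imJ - a.imI * b.imK + a.imJ * b.re + a.imK * b.imI,
     a.re * b.imK + a.imI * b.imJ - a.imJ * b.imI + a.imK * b.re⟩ :=
  QuaternionAlgebra.ext (Quaternion.re_mul a b) (Quaternion.imI_mul a b)
    (Quaternion.imJ_mul a b) (Quaternion.imK_mul a b)
lemma oq_sub (a b : QuaternionAlgebra ℝ (-1) 0 (-1)) : @HSub.hSub ℍ[ℝ] ℍ[ℝ] ℍ[ℝ] _ a b =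
    ⟨a.re - b.re, a.imI - b.imI, a.imJ - b.imJ, a.imK - b.imK⟩ :=
  QuaternionAlgebra.ext (Quaternion.re_sub a b) (Quaternion.imI_sub a b)
    (Quaternion.imJ_sub a b) (Quaternion.imK_sub a b)
lemma oq_add (a b : QuaternionAlgebra ℝ (-1) 0 (-1)) : @HAdd.hAdd ℍ[ℝ] ℍ[ℝ] ℍ[ℝ] _ a b =
    ⟨a.re + b.re, a.imI + b.imI, a.imJ + b.imJ, a.imK + b.imK⟩ :=
  QuaternionAlgebra.ext (Quaternion.re_add a b) (Quaternion.imI_add a b)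
    (Quaternion.imJ_add a b) (Quaternion.imK_add a b)
lemma oq_star (a : QuaternionAlgebra ℝ (-1) 0 (-1)) : @star ℍ[ℝ] _ a = ⟨a.re, -a.imI, -a.imJ, -a.imK⟩ :=
  QuaternionAlgebra.ext (Quaternion.re_star a) (Quaternion.imI_star a)
    (Quaternion.imJ_star a) (Quaternion.imK_star a)
lemma oq_one : (1 : ℍ[ℝ]) = ⟨1, 0, 0, 0⟩ := by
  refine QuaternionAlgebra.ext ?_ ?_ ?_ ?_ <;> simp
lemma oq_zero : (0 : ℍ[ℝ]) = ⟨0, 0, 0, 0⟩ := by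
  refine QuaternionAlgebra.ext ?_ ?_ ?_ ?_ <;> simp
lemma row0 (a0 a1 a2 a3 a4 a5 a6 a7 p0 p1 p2 p3 p4 p5 p6 p7 : ℝ) :
    omul (⟨a0,a1,a2,a3⟩,⟨a4,a5,a6,a7⟩) (omul (((1 : ℍ[ℝ]), (0 : ℍ[ℝ]))) (⟨p0,p1,p2,p3⟩,⟨p4,p5,p6,p7⟩))
      = ((⟨a0*p0 - a1*p1 - a2*p2 - a3*p3 - a4*p4 - a5*p5 - a6*p6 - a7*p7, a0*p1 + a1*p0 + a2*p3 - a3*p2 + a4*p5 - a5*p4 - a6*p7 + a7*p6, a0*p2 - a1*p3 + a2*p0 + a3*p1 + a4*p6 + a5*p7 - a6*p4 - a7*p5, a0*p3 + a1*p2 - a2*p1 + a3*p0 + a4*p7 - a5*p6 + a6*p5 - a7*p4⟩ : ℍ[ℝ]), (⟨a0*p4 - a1*p5 - a2*p6 - a3*p7 + a4*p0 + a5*p1 + a6*p2 + a7*p3, a0*p5 + a1*p4 - a2*p7 + a3*p6 - a4*p1 + a5*p0 - a6*p3 + a7*p2, a0*p6 + a1*p7 + a2*p4 - a3*p5 - a4*p2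 + a5*p3 + a6*p0 - a7*p1, a0*p7 - a1*p6 + a2*p5 + a3*p4 - a4*p3 - a5*p2 + a6*p1 + a7*p0⟩ : ℍ[ℝ])) := by
  simp only [omul]
  simp only [oq_one, oq_zero, oq_mul, oq_star, oq_sub, oq_add]
  refine Prod.ext (QuaternionAlgebra.ext ?_ ?_ ?_ ?_) (QuaternionAlgebra.ext ?_ ?_ ?_ ?_) <;> dsimp only <;>
    ring

lemma row1 (a0 a1 a2 a3 a4 a5 a6 a7 p0 p1 p2 p3 p4 p5 p6 p7 : ℝ) :
    omul (⟨a0,a1,a2,a3⟩,⟨a4,a5,a6,a7⟩) (omul (((⟨0,1,0,0⟩ : ℍ[ℝ]), (0 : ℍ[ℝ]))) (⟨p0,p1,p2,p3⟩,⟨p4,p5,p6,p7⟩))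
      = ((⟨-a0*p1 - a1*p0 + a2*p3 - a3*p2 + a4*p5 - a5*p4 - a6*p7 + a7*p6, a0*p0 - a1*p1 + a2*p2 + a3*p3 + a4*p4 + a5*p5 + a6*p6 + a7*p7, -a0*p3 - a1*p2 - a2*p1 + a3*p0 + a4*p7 - a5*p6 + a6*p5 - a7*p4, a0*p2 - a1*p3 - a2*p0 - a3*p1 - a4*p6 - a5*p7 + a6*p4 + a7*p5⟩ : ℍ[ℝ]), (⟨-a0*p5 - a1*p4 - a2*p7 + a3*p6 - a4*p1 + a5*p0 - a6*p3 + a7*p2, a0*p4 - a1*p5 + a2*p6 + a3*p7 - a4*p0 - a5*p1 - a6*p2 - a7*p3, a0*p7 - a1*p6 - a2*p5 - a3*p4 + a4*p3 + a5*p2 - a6*p1 - a7*p0, -a0*p6 - a1*p7 + a2*p4 - a3*p5 - a4*p2 + a5*p3 + a6*p0 - a7*p1⟩ : ℍ[ℝ])) := by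
  simp only [omul]
  simp only [oq_one, oq_zero, oq_mul, oq_star, oq_sub, oq_add]
  refine Prod.ext (QuaternionAlgebra.ext ?_ ?_ ?_ ?_) (QuaternionAlgebra.ext ?_ ?_ ?_ ?_) <;> dsimp only <;>
    ring

lemma row2 (a0 a1 a2 a3 a4 a5 a6 a7 p0 p1 p2 p3 p4 p5 p6 p7 : ℝ) :
    omul (⟨a0,a1,a2,a3⟩,⟨a4,a5,a6,a7⟩) (omul (((⟨0,0,1,0⟩ : ℍ[ℝ]), (0 : ℍ[ℝ]))) (⟨p0,p1,p2,p3⟩,⟨p4,p5,p6,p7⟩))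
      = ((⟨-a0*p2 - a1*p3 - a2*p0 + a3*p1 + a4*p6 + a5*p7 - a6*p4 - a7*p5, a0*p3 - a1*p2 - a2*p1 - a3*p0 - a4*p7 + a5*p6 - a6*p5 + a7*p4, a0*p0 + a1*p1 - a2*p2 + a3*p3 + a4*p4 + a5*p5 + a6*p6 + a7*p7, -a0*p1 + a1*p0 - a2*p3 - a3*p2 + a4*p5 - a5*p4 - a6*p7 + a7*p6⟩ : ℍ[ℝ]), (⟨-a0*p6 + a1*p7 - a2*p4 - a3*p5 - a4*p2 + a5*p3 + a6*p0 - a7*p1, -a0*p7 - a1*p6 - a2*p5 + a3*p4 - a4*p3 - a5*p2 + a6*p1 + a7*p0, a0*p4 + a1*p5 - a2*p6 + a3*p7 - a4*p0 - a5*p1 - a6*p2 - a7*p3, a0*p5 - a1*p4 - a2*p7 - a3*p6 + a4*p1 - a5*p0 + a6*p3 - a7*p2⟩ : ℍ[ℝ])) := by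
  simp only [omul]
  simp only [oq_one, oq_zero, oq_mul, oq_star, oq_sub, oq_add]
  refine Prod.ext (QuaternionAlgebra.ext ?_ ?_ ?_ ?_) (QuaternionAlgebra.ext ?_ ?_ ?_ ?_) <;> dsimp only <;>
    ring

lemma row3 (a0 a1 a2 a3 a4 a5 a6 a7 p0 p1 p2 p3 p4 p5 p6 p7 : ℝ) :
    omul (⟨a0,a1,a2,a3⟩,⟨a4,a5,a6,a7⟩) (omul (((⟨0,0,0,1⟩ : ℍ[ℝ]), (0 : ℍ[ℝ]))) (⟨p0,p1,p2,p3⟩,⟨p4,p5,p6,p7⟩))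
      = ((⟨-a0*p3 + a1*p2 - a2*p1 - a3*p0 + a4*p7 - a5*p6 + a6*p5 - a7*p4, -a0*p2 - a1*p3 + a2*p0 - a3*p1 + a4*p6 + a5*p7 - a6*p4 - a7*p5, a0*p1 - a1*p0 - a2*p3 - a3*p2 - a4*p5 + a5*p4 + a6*p7 - a7*p6, a0*p0 + a1*p1 + a2*p2 - a3*p3 + a4*p4 + a5*p5 + a6*p6 + a7*p7⟩ : ℍ[ℝ]), (⟨-a0*p7 - a1*p6 + a2*p5 - a3*p4 - a4*p3 - a5*p2 + a6*p1 + a7*p0, a0*p6 - a1*p7 - a2*p4 - a3*p5 + a4*p2 - a5*p3 - a6*p0 + a7*p1, -a0*p5 + a1*p4 - a2*p7 - a3*p6 - a4*p1 + a5*p0 - a6*p3 + a7*p2, a0*p4 + a1*p5 + a2*p6 - a3*p7 - a4*p0 - a5*p1 - a6*p2 - a7*p3⟩ : ℍ[ℝ])) := by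
  simp only [omul]
  simp only [oq_one, oq_zero, oq_mul, oq_star, oq_sub, oq_add]
  refine Prod.ext (QuaternionAlgebra.ext ?_ ?_ ?_ ?_) (QuaternionAlgebra.ext ?_ ?_ ?_ ?_) <;> dsimp only <;>
    ring

lemma row4 (a0 a1 a2 a3 a4 a5 a6 a7 p0 p1 p2 p3 p4 p5 p6 p7 : ℝ) :
    omul (⟨a0,a1,a2,a3⟩,⟨a4,a5,a6,a7⟩) (omul (((0 : ℍ[ℝ]), (1 : ℍ[ℝ]))) (⟨p0,p1,p2,p3⟩,⟨p4,p5,p6,p7⟩))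
      = ((⟨-a0*p4 - a1*p5 - a2*p6 - a3*p7 - a4*p0 + a5*p1 + a6*p2 + a7*p3, a0*p5 - a1*p4 + a2*p7 - a3*p6 - a4*p1 - a5*p0 + a6*p3 - a7*p2, a0*p6 - a1*p7 - a2*p4 + a3*p5 - a4*p2 - a5*p3 - a6*p0 + a7*p1, a0*p7 + a1*p6 - a2*p5 - a3*p4 - a4*p3 + a5*p2 - a6*p1 - a7*p0⟩ : ℍ[ℝ]), (⟨a0*p0 + a1*p1 + a2*p2 + a3*p3 - a4*p4 + a5*p5 + a6*p6 + a7*p7, -a0*p1 + a1*p0 + a2*p3 - a3*p2 - a4*p5 - a5*p4 - a6*p7 + a7*p6, -a0*p2 - a1*p3 + a2*p0 + a3*p1 - a4*p6 + a5*p7 - a6*p4 - a7*p5, -a0*p3 + a1*p2 - a2*p1 + a3*p0 - a4*p7 - a5*p6 + a6*p5 - a7*p4⟩ : ℍ[ℝ])) := by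
  simp only [omul]
  simp only [oq_one, oq_zero, oq_mul, oq_star, oq_sub, oq_add]
  refine Prod.ext (QuaternionAlgebra.ext ?_ ?_ ?_ ?_) (QuaternionAlgebra.ext ?_ ?_ ?_ ?_) <;> dsimp only <;>
    ring

lemma row5 (a0 a1 a2 a3 a4 a5 a6 a7 p0 p1 p2 p3 p4 p5 p6 p7 : ℝ) :
    omul (⟨a0,a1,a2,a3⟩,⟨a4,a5,a6,a7⟩) (omul (((0 : ℍ[ℝ]), (⟨0,1,0,0⟩ : ℍ[ℝ]))) (⟨p0,p1,p2,p3⟩,⟨p4,p5,p6,p7⟩))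
      = ((⟨-a0*p5 + a1*p4 - a2*p7 + a3*p6 - a4*p1 - a5*p0 - a6*p3 + a7*p2, -a0*p4 - a1*p5 - a2*p6 - a3*p7 + a4*p0 - a5*p1 + a6*p2 + a7*p3, a0*p7 + a1*p6 - a2*p5 - a3*p4 + a4*p3 - a5*p2 - a6*p1 - a7*p0, -a0*p6 + a1*p7 + a2*p4 - a3*p5 - a4*p2 - a5*p3 + a6*p0 - a7*p1⟩ : ℍ[ℝ]), (⟨a0*p1 - a1*p0 - a2*p3 + a3*p2 - a4*p5 - a5*p4 + a6*p7 - a7*p6, a0*p0 + a1*p1 + a2*p2 + a3*p3 + a4*p4 - a5*p5 + a6*p6 + a7*p7, a0*p3 - a1*p2 + a2*p1 - a3*p0 - a4*p7 - a5*p6 - a6*p5 + a7*p4, -a0*p2 - a1*p3 + a2*p0 + a3*p1 + a4*p6 - a5*p7 - a6*p4 - a7*p5⟩ : ℍ[ℝ])) := by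
  simp only [omul]
  simp only [oq_one, oq_zero, oq_mul, oq_star, oq_sub, oq_add]
  refine Prod.ext (QuaternionAlgebra.ext ?_ ?_ ?_ ?_) (QuaternionAlgebra.ext ?_ ?_ ?_ ?_) <;> dsimp only <;>
    ring

lemma row6 (a0 a1 a2 a3 a4 a5 a6 a7 p0 p1 p2 p3 p4 p5 p6 p7 : ℝ) :
    omul (⟨a0,a1,a2,a3⟩,⟨a4,a5,a6,a7⟩) (omul (((0 : ℍ[ℝ]), (⟨0,0,1,0⟩ : ℍ[ℝ]))) (⟨p0,p1,p2,p3⟩,⟨p4,p5,p6,p7⟩))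
      = ((⟨-a0*p6 + a1*p7 + a2*p4 - a3*p5 - a4*p2 + a5*p3 - a6*p0 - a7*p1, -a0*p7 - a1*p6 + a2*p5 + a3*p4 - a4*p3 - a5*p2 - a6*p1 + a7*p0, -a0*p4 - a1*p5 - a2*p6 - a3*p7 + a4*p0 + a5*p1 - a6*p2 + a7*p3, a0*p5 - a1*p4 + a2*p7 - a3*p6 + a4*p1 - a5*p0 - a6*p3 - a7*p2⟩ : ℍ[ℝ]), (⟨a0*p2 + a1*p3 - a2*p0 - a3*p1 - a4*p6 - a5*p7 - a6*p4 + a7*p5, -a0*p3 + a1*p2 - a2*p1 + a3*p0 + a4*p7 - a5*p6 - a6*p5 - a7*p4, a0*p0 + a1*p1 + a2*p2 + a3*p3 + a4*p4 + a5*p5 - a6*p6 + a7*p7, a0*p1 - a1*p0 - a2*p3 + a3*p2 - a4*p5 + a5*p4 - a6*p7 - a7*p6⟩ : ℍ[ℝ])) := by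
  simp only [omul]
  simp only [oq_one, oq_zero, oq_mul, oq_star, oq_sub, oq_add]
  refine Prod.ext (QuaternionAlgebra.ext ?_ ?_ ?_ ?_) (QuaternionAlgebra.ext ?_ ?_ ?_ ?_) <;> dsimp only <;>
    ring

lemma row7 (a0 a1 a2 a3 a4 a5 a6 a7 p0 p1 p2 p3 p4 p5 p6 p7 : ℝ) :
    omul (⟨a0,a1,a2,a3⟩,⟨a4,a5,a6,a7⟩) (omul (((0 : ℍ[ℝ]), (⟨0,0,0,1⟩ : ℍ[ℝ]))) (⟨p0,p1,p2,p3⟩,⟨p4,p5,p6,p7⟩))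
      = ((⟨-a0*p7 - a1*p6 + a2*p5 + a3*p4 - a4*p3 - a5*p2 + a6*p1 - a7*p0, a0*p6 - a1*p7 - a2*p4 + a3*p5 + a4*p2 - a5*p3 - a6*p0 - a7*p1, -a0*p5 + a1*p4 - a2*p7 + a3*p6 - a4*p1 + a5*p0 - a6*p3 - a7*p2, -a0*p4 - a1*p5 - a2*p6 - a3*p7 + a4*p0 + a5*p1 + a6*p2 - a7*p3⟩ : ℍ[ℝ]), (⟨a0*p3 - a1*p2 + a2*p1 - a3*p0 - a4*p7 + a5*p6 - a6*p5 - a7*p4, a0*p2 + a1*p3 - a2*p0 - a3*p1 - a4*p6 - a5*p7 + a6*p4 - a7*p5, -a0*p1 + a1*p0 + a2*p3 - a3*p2 + a4*p5 - a5*p4 - a6*p7 - a7*p6, a0*p0 + a1*p1 + a2*p2 + a3*p3 + a4*p4 + a5*p5 + a6*p6 - a7*p7⟩ : ℍ[ℝ])) := by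
  simp only [omul]
  simp only [oq_one, oq_zero, oq_mul, oq_star, oq_sub, oq_add]
  refine Prod.ext (QuaternionAlgebra.ext ?_ ?_ ?_ ?_) (QuaternionAlgebra.ext ?_ ?_ ?_ ?_) <;> dsimp only <;>
    ring
set_option maxHeartbeats 40000000 in
lemma okey (A P : ℍ[ℝ] × ℍ[ℝ]) (i j : Fin 8) :
    ∑ k, ocoord (omul A (omul (obasis i) P)) k * ocoord (omul A (omul (obasis j) P)) k
      = (if i = j then 1 else 0) * (onorm A * onorm P) := by
  obtain ⟨⟨a0,a1,a2,a3⟩,⟨a4,a5,a6,a7⟩⟩ := A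
  obtain ⟨⟨p0,p1,p2,p3⟩,⟨p4,p5,p6,p7⟩⟩ := P
  rw [onorm_eq, onorm_eq]
  fin_cases i <;> fin_cases j <;>
    simp only [obasis, row0, row1, row2, row3, row4, row5, row6, row7,
      Fin.sum_univ_eight, ocoord, Fin.isValue, Fin.mk.injEq, Nat.reduceEqDiff, reduceIte, one_mul, zero_mul] <;>
    ring

/-- The paper's main theorem: the 8×8 matrix whose rows are the coordinates of
`A * (eᵢ * P)` has pairwise orthogonal rows of common squared norm
`N(A) * N(P)`; i.e. `M * Mᵀ = (N(A) * N(P)) • I`, so `M` is a semi-magic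
square of squares with orthogonal rows. -/
theorem octonion_semimagic_rows (A P : ℍ[ℝ] × ℍ[ℝ])
    (M : Matrix (Fin 8) (Fin 8) ℝ)
    (hM : ∀ i j, M i j = ocoord (omul A (omul (obasis i) P)) j) :
    M * Mᵀ = (onorm A * onorm P) • (1 : Matrix (Fin 8) (Fin 8) ℝ) ∧
    (∀ i j : Fin 8, i ≠ j → ∑ k, M i k * M j k = 0) ∧
    (∀ i : Fin 8, ∑ k, (M i k) ^ 2 = onorm A * onorm P) ∧
    (∀ i : Fin 8, onorm (omul A (omul (obasis i) P)) = onorm A * onorm P) := by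
  have key : ∀ i j : Fin 8, ∑ k, M i k * M j k
      = (if i = j then 1 else 0) * (onorm A * onorm P) := by
    intro i j
    simp only [hM]
    exact okey A P i j
  refine ⟨?_, ?_, ?_, ?_⟩
  · ext i j
    rw [Matrix.mul_apply]
    simp only [Matrix.transpose_apply, Matrix.smul_apply, Matrix.one_apply, key, smul_eq_mul]
    by_cases h : i = j <;> simp [h]
  · intro i j h
    rw [key, if_neg h, zero_mul]
  · intro i
    simp only [sq]
    rw [key, if_pos rfl, one_mul]
  · intro i
    have h1 : onorm (omul A (omul (obasis i) P)) = ∑ k, (M i k) ^ 2 := by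
      rw [Fin.sum_univ_eight, onorm_eq]
      simp only [hM, ocoord]
      ring
    have h2 : ∑ k, (M i k) ^ 2 = ∑ k, M i k * M i k := by
      simp [sq]
    rw [h1, h2, key, if_pos rfl, one_mul]
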